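/- Let D = (V, E) be a finite directed graph and for each edge e = (i, j) ∈ E let θ_e : ℤ → ℝ be convex. Suppose x : E → ℤ is dual feasible with potential function π : V → ℝ, i.e. for every edge e = (i, j) one has θ_e(x_e + 1) − θ_e(x_e) − π_j + π_i ≥ 0 and θ_e(x_e − 1) − θ_e(x_e) + π_j − π_i ≥ 0. Then for every integer circulation y : E → ℤ (i.e. g_v(y) = 0 for all v ∈ V) one has Σ_{e∈E} θ_e(y_e) ≥ Σ_{e∈E} θ_e(x_e) + Σ_{v∈V} π_v · g_v(x). -/

import Mathlib

/-- The excess of vertex `v` for the vector `x : E → ℤ` in a directed graph with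
tail map `t` and head map `h`:
`g_v(x) = Σ_{e : t e = v} x e − Σ_{e : h e = v} x e`. -/
def excess {V E : Type*} [Fintype E] [DecidableEq V]
    (t h : E → V) (x : E → ℤ) (v : V) : ℤ :=
  (∑ e : E, if t e = v then x e else 0) - (∑ e : E, if h e = v then x e else 0)

private lemma conv_step (f : ℤ → ℝ) (hf : ∀ z : ℤ, f (z + 1) + f (z - 1) ≥ 2 * f z)
    (a : ℤ) : ∀ n : ℕ, f (a + n + 1) - f (a + n) ≥ f (a + 1) - f a := by
  intro n
  induction n with
  | zero => simp
  | succ n ih =>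
    have h := hf (a + n + 1)
    rw [show (a + (n:ℤ) + 1) - 1 = a + n by ring] at h
    have : f (a + (n+1) + 1) - f (a + (n+1)) ≥ f (a + n + 1) - f (a + n) := by
      push_cast
      rw [show (a + (((n:ℤ))+1) + 1) = (a + n + 1) + 1 by ring,
        show (a + (((n:ℤ))+1)) = a + (n:ℤ) + 1 by ring]
      linarith
    calc f (a + (n+1) + 1) - f (a + (n+1)) ≥ f (a + n + 1) - f (a + n) := this
      _ ≥ f (a + 1) - f a := ih

private lemma conv_up (f : ℤ → ℝ) (hf : ∀ z : ℤ, f (z + 1) + f (z - 1) ≥ 2 * f z)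
    (a : ℤ) : ∀ n : ℕ, f (a + n) ≥ f a + n * (f (a + 1) - f a) := by
  intro n
  induction n with
  | zero => simp
  | succ n ih =>
    have h := conv_step f hf a n
    push_cast
    rw [show a + (((n:ℤ))+1) = a + (n:ℤ) + 1 by ring]
    push_cast at ih
    linarith

private lemma conv_down (f : ℤ → ℝ) (hf : ∀ z : ℤ, f (z + 1) + f (z - 1) ≥ 2 * f z)
    (a : ℤ) : ∀ n : ℕ, f (a - n) ≥ f a + n * (f (a - 1) - f a) := by
  intro n
  have hg : ∀ z : ℤ, (fun z => f (-z)) (z + 1) + (fun z => f (-z)) (z - 1) ≥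
      2 * (fun z => f (-z)) z := by
    intro z
    simp only
    have := hf (-z)
    rw [show -(z+1) = (-z) - 1 by ring, show -(z-1) = (-z) + 1 by ring]
    linarith
  have := conv_up (fun z => f (-z)) hg (-a) n
  rw [show -(-a + (n:ℤ)) = a - n by ring, show -(-a) = a by ring,
    show -(-a + 1) = a - 1 by ring] at this
  exact this

/-- edge inequality -/
private lemma edge_ineq (f : ℤ → ℝ) (hf : ∀ z : ℤ, f (z + 1) + f (z - 1) ≥ 2 * f z)
    (a b : ℤ) (c : ℝ) (h1 : f (a + 1) - f a ≥ c) (h2 : f (a - 1) - f a ≥ -c) :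
    f b ≥ f a + ((b - a : ℤ) : ℝ) * c := by
  rcases le_or_gt a b with hab | hab
  · obtain ⟨n, hn⟩ := Int.le.dest hab
    have := conv_up f hf a n
    have hc : ((b - a : ℤ) : ℝ) = (n : ℝ) := by rw [← hn]; push_cast; ring
    rw [hc, ← hn]
    have : (n:ℝ) * (f (a+1) - f a) ≥ (n:ℝ) * c :=
      mul_le_mul_of_nonneg_left h1 (by positivity)
    have h3 := conv_up f hf a n
    nlinarith [h3, this]
  · have hab' : b ≤ a := le_of_lt hab
    obtain ⟨n, hn⟩ := Int.le.dest hab'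
    have hb : b = a - n := by omega
    have hc : ((b - a : ℤ) : ℝ) = -(n : ℝ) := by rw [hb]; push_cast; ring
    rw [hc, hb]
    have h3 := conv_down f hf a n
    have : (n:ℝ) * (f (a-1) - f a) ≥ (n:ℝ) * (-c) :=
      mul_le_mul_of_nonneg_left h2 (by positivity)
    nlinarith [h3, this]

private lemma sum_excess {V E : Type*} [Fintype V] [Fintype E] [DecidableEq V]
    (t h : E → V) (x : E → ℤ) (π : V → ℝ) :
    ∑ v : V, π v * ((excess t h x v : ℤ) : ℝ)
      = ∑ e : E, (x e : ℝ) * (π (t e) - π (h e)) := by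
  unfold excess
  push_cast
  have key : ∀ v : V, π v * ((∑ e : E, if t e = v then ((x e : ℝ)) else 0)
      - ∑ e : E, if h e = v then ((x e : ℝ)) else 0)
    = ∑ e : E, (π v * (if t e = v then ((x e : ℝ)) else 0)
        - π v * (if h e = v then ((x e : ℝ)) else 0)) := by
    intro v
    rw [Finset.sum_sub_distrib, mul_sub, Finset.mul_sum, Finset.mul_sum]
  simp only [key]
  rw [Finset.sum_comm]
  apply Finset.sum_congr rfl
  intro e _
  simp [mul_ite, Finset.sum_sub_distrib, Finset.sum_ite_eq]
  ring

/-- If `x : E → ℤ` is dual feasible with potentials `π : V → ℝ` for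
edgewise convex costs `θ`, then every integer circulation `y` satisfies
`Σ_e θ_e (y e) ≥ Σ_e θ_e (x e) + Σ_v π v * g_v(x)`. -/
theorem stmt2 {V E : Type*} [Fintype V] [Fintype E] [DecidableEq V]
    (t h : E → V) (θ : E → ℤ → ℝ)
    (hconv : ∀ (e : E) (z : ℤ), θ e (z + 1) + θ e (z - 1) ≥ 2 * θ e z)
    (x : E → ℤ) (π : V → ℝ)
    (hfeas : ∀ e : E,
      θ e (x e + 1) - θ e (x e) - π (h e) + π (t e) ≥ 0 ∧
      θ e (x e - 1) - θ e (x e) + π (h e) - π (t e) ≥ 0)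
    (y : E → ℤ) (hy : ∀ v : V, excess t h y v = 0) :
    ∑ e : E, θ e (y e) ≥
      (∑ e : E, θ e (x e)) + ∑ v : V, π v * ((excess t h x v : ℤ) : ℝ) := by
  have key : ∀ e : E, θ e (y e) ≥ θ e (x e) +
      ((y e - x e : ℤ) : ℝ) * (π (h e) - π (t e)) := by
    intro e
    obtain ⟨h1, h2⟩ := hfeas e
    exact edge_ineq (θ e) (hconv e) (x e) (y e) (π (h e) - π (t e))
      (by linarith) (by linarith)
  have hsum : ∑ e : E, θ e (y e) ≥
      ∑ e : E, (θ e (x e) + ((y e - x e : ℤ) : ℝ) * (π (h e) - π (t e))) :=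
    Finset.sum_le_sum (fun e _ => key e)
  have hy0 : ∑ v : V, π v * ((excess t h y v : ℤ) : ℝ) = 0 := by
    simp [hy]
  have hey := sum_excess t h y π
  have hex := sum_excess t h x π
  rw [hy0] at hey
  have hdiff : ∑ e : E, ((y e - x e : ℤ) : ℝ) * (π (h e) - π (t e))
      = (∑ e : E, (x e : ℝ) * (π (t e) - π (h e)))
        - ∑ e : E, (y e : ℝ) * (π (t e) - π (h e)) := by
    rw [← Finset.sum_sub_distrib]
    apply Finset.sum_congr rfl; intro e _; push_cast; ring
  rw [Finset.sum_add_distrib] at hsum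
  rw [hdiff, ← hex] at hsum
  linarith
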